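/- Let each ψ_i be μ_ψ-strongly convex and L_ψ-smooth, and ω be μ_ω-strongly convex and L_ω-smooth and block separable over ℬ (allowing μ_ψ = μ_ω = 0), and set μ = μ_ψ + μ_ω. Then for all x, y, f(x) ≥ f(y) + ⟨∇f(y), x − y⟩ + (1/(2n(L_f − μ))) ∑_{i=1}^n ‖∇ξ_i(x) − ∇ξ_i(y)‖² + (μ L_f/(2 d_max (L_f − μ))) ‖x − y‖² + (μ/(L_f − μ)) ⟨∇f(x) − ∇f(y), y − x⟩. -/

import Mathlib

open Finset
open scoped RealInnerProductSpace

noncomputable section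

variable {p : ℕ}

/-- `f` is `μ`-strongly convex (on all of `ℝ^p`). -/
def StrongConvexOnR (μ : ℝ) (f : EuclideanSpace ℝ (Fin p) → ℝ) : Prop :=
  ∀ x y : EuclideanSpace ℝ (Fin p), ∀ a b : ℝ, 0 ≤ a → 0 ≤ b → a + b = 1 →
    f (a • x + b • y) ≤ a * f x + b * f y - μ / 2 * (a * b) * ‖x - y‖ ^ 2

lemma norm_sq_eq (z : EuclideanSpace ℝ (Fin p)) : ‖z‖ ^ 2 = ∑ j, (z j) ^ 2 := by
  rw [EuclideanSpace.norm_eq]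
  rw [Real.sq_sqrt (by positivity)]
  simp [sq_abs]

def projP {p : ℕ} {Bk : Type} [DecidableEq Bk] (blk : Fin p → Bk) (S : Finset Bk)
    (z : EuclideanSpace ℝ (Fin p)) : EuclideanSpace ℝ (Fin p) :=
  WithLp.toLp 2 (fun j => if blk j ∈ S then z j else 0)

section projlemmas
variable {Bk : Type} [DecidableEq Bk] (blk : Fin p → Bk) (S : Finset Bk)

lemma projP_apply (z : EuclideanSpace ℝ (Fin p)) (j : Fin p) :
    projP blk S z j = if blk j ∈ S then z j else 0 := rfl

lemma projP_sub (u v : EuclideanSpace ℝ (Fin p)) :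
    projP blk S (u - v) = projP blk S u - projP blk S v := by
  ext j
  simp only [projP_apply, PiLp.sub_apply]
  split <;> simp

lemma projP_smul (c : ℝ) (u : EuclideanSpace ℝ (Fin p)) :
    projP blk S (c • u) = c • projP blk S u := by
  ext j
  simp only [projP_apply, PiLp.smul_apply, smul_eq_mul]
  split <;> simp

lemma projP_idem (u : EuclideanSpace ℝ (Fin p)) :
    projP blk S (projP blk S u) = projP blk S u := by
  ext j
  simp only [projP_apply]
  split <;> simp_all

lemma projP_sym (u v : EuclideanSpace ℝ (Fin p)) :
    ⟪projP blk S u, v⟫ = ⟪u, projP blk S v⟫ := by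
  simp only [PiLp.inner_apply, projP_apply, RCLike.inner_apply, conj_trivial]
  congr 1; funext j
  split <;> simp

lemma projP_normsq (z : EuclideanSpace ℝ (Fin p)) :
    ‖projP blk S z‖ ^ 2 = ∑ j, if blk j ∈ S then (z j) ^ 2 else 0 := by
  rw [norm_sq_eq]
  congr 1; funext j
  simp only [projP_apply]
  split <;> simp

lemma projP_single_apply (b : Bk) (z : EuclideanSpace ℝ (Fin p)) (j : Fin p) :
    projP blk {b} z j = if blk j = b then z j else 0 := by
  simp only [projP_apply, Finset.mem_singleton]

lemma projP_single_normsq (b : Bk) (z : EuclideanSpace ℝ (Fin p)) :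
    ‖projP blk {b} z‖ ^ 2 = ∑ j, if blk j = b then (z j) ^ 2 else 0 := by
  rw [projP_normsq]
  congr 1; funext j
  simp only [Finset.mem_singleton]

end projlemmas

lemma dir_deriv {g : EuclideanSpace ℝ (Fin p) → ℝ} {G : EuclideanSpace ℝ (Fin p)}
    {x v : EuclideanSpace ℝ (Fin p)} {t₀ : ℝ}
    (h : HasGradientAt g G (x + t₀ • v)) :
    HasDerivAt (fun t : ℝ => g (x + t • v)) ⟪G, v⟫ t₀ := by
  have hline : HasDerivAt (fun t : ℝ => x + t • v) v t₀ := by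
    simpa using ((hasDerivAt_id t₀).smul_const v).const_add x
  have := (h.hasFDerivAt.comp_hasDerivAt t₀ hline)
  simp [InnerProductSpace.toDual_apply_apply] at this
  exact this

/-- first-order lower bound from strong convexity -/
lemma sc_lower {g : EuclideanSpace ℝ (Fin p) → ℝ} {μ : ℝ}
    (hsc : StrongConvexOnR μ g)
    {G : EuclideanSpace ℝ (Fin p)} (x y : EuclideanSpace ℝ (Fin p))
    (hG : HasGradientAt g G y) :
    g y + ⟪G, x - y⟫ + μ / 2 * ‖x - y‖ ^ 2 ≤ g x := by
  have hd : HasDerivAt (fun t : ℝ => g (y + t • (x - y))) ⟪G, x - y⟫ 0 := by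
    apply dir_deriv; simpa using hG
  -- slope tendsto
  have hslope := hasDerivAt_iff_tendsto_slope.mp hd
  have hslope' : Filter.Tendsto (slope (fun t : ℝ => g (y + t • (x - y))) 0)
      (nhdsWithin 0 (Set.Ioo (0:ℝ) 1)) (nhds ⟪G, x - y⟫) :=
    hslope.mono_left (nhdsWithin_mono 0 (by intro t ht; exact ne_of_gt ht.1))
  have hlim2 : Filter.Tendsto (fun t : ℝ => g x - g y - μ / 2 * (1 - t) * ‖x - y‖ ^ 2)
      (nhdsWithin 0 (Set.Ioo (0:ℝ) 1)) (nhds (g x - g y - μ / 2 * ‖x - y‖ ^ 2)) := by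
    have : Filter.Tendsto (fun t : ℝ => g x - g y - μ / 2 * (1 - t) * ‖x - y‖ ^ 2)
        (nhds 0) (nhds (g x - g y - μ / 2 * (1 - 0) * ‖x - y‖ ^ 2)) := by
      apply Continuous.tendsto; continuity
    simpa using this.mono_left nhdsWithin_le_nhds
  have hne : (nhdsWithin (0:ℝ) (Set.Ioo (0:ℝ) 1)).NeBot := by
    exact left_nhdsWithin_Ioo_neBot (by norm_num)
  have key : ⟪G, x - y⟫ ≤ g x - g y - μ / 2 * ‖x - y‖ ^ 2 := by
    apply le_of_tendsto_of_tendsto hslope' hlim2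
    filter_upwards [self_mem_nhdsWithin] with t ht
    have ht0 : 0 < t := ht.1
    have ht1 : t < 1 := ht.2
    have hcvx := hsc x y t (1 - t) (le_of_lt ht0) (by linarith) (by ring)
    have harg : t • x + (1 - t) • y = y + t • (x - y) := by
      module
    rw [harg] at hcvx
    have : slope (fun t : ℝ => g (y + t • (x - y))) 0 t
        = (g (y + t • (x - y)) - g y) / t := by
      simp [slope]
      exact inv_mul_eq_div _ _
    rw [this]
    rw [div_le_iff₀ ht0]
    have : g (y + t • (x - y)) - g y ≤ t * (g x - g y) - μ / 2 * (t * (1-t)) * ‖x - y‖^2 := by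
      nlinarith [hcvx]
    calc g (y + t • (x - y)) - g y ≤ t * (g x - g y) - μ / 2 * (t * (1-t)) * ‖x - y‖^2 := this
      _ = (g x - g y - μ / 2 * (1 - t) * ‖x - y‖ ^ 2) * t := by ring
  linarith [key]
/-- descent lemma -/
lemma descent_lemma {g : EuclideanSpace ℝ (Fin p) → ℝ}
    {G : EuclideanSpace ℝ (Fin p) → EuclideanSpace ℝ (Fin p)}
    (hdiff : ∀ z, HasGradientAt g (G z) z) {L : ℝ}
    (hlip : ∀ a b, ‖G a - G b‖ ≤ L * ‖a - b‖) (x y : EuclideanSpace ℝ (Fin p)) :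
    g x ≤ g y + ⟪G y, x - y⟫ + L / 2 * ‖x - y‖ ^ 2 := by
  rcases eq_or_ne x y with rfl | hxy
  · simp
  have hd : (0:ℝ) < ‖x - y‖ := by
    rw [norm_pos_iff]; exact sub_ne_zero_of_ne hxy
  have hL : 0 ≤ L := by
    have := hlip x y
    nlinarith [norm_nonneg (G x - G y)]
  set d := x - y with hdd
  have hGcont : Continuous G := by
    have : LipschitzWith (Real.toNNReal L) G := by
      intro a b
      rw [edist_nndist, edist_nndist, ← ENNReal.coe_mul, ENNReal.coe_le_coe,
        ← NNReal.coe_le_coe]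
      push_cast
      calc (nndist (G a) (G b) : ℝ) = ‖G a - G b‖ := by rw [coe_nndist, dist_eq_norm]
        _ ≤ L * ‖a - b‖ := hlip a b
        _ ≤ Real.toNNReal L * nndist a b := by
            rw [coe_nndist, dist_eq_norm, Real.coe_toNNReal L hL]
    exact this.continuous
  have hφ : ∀ t : ℝ, HasDerivAt (fun s : ℝ => g (y + s • d)) ⟪G (y + t • d), d⟫ t :=
    fun t => dir_deriv (hdiff _)
  have hφ'cont : Continuous (fun t : ℝ => ⟪G (y + t • d), d⟫) := by
    apply Continuous.inner
    · exact hGcont.comp (by continuity)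
    · exact continuous_const
  have hint : IntervalIntegrable (fun t : ℝ => ⟪G (y + t • d), d⟫)
      MeasureTheory.volume 0 1 := hφ'cont.intervalIntegrable _ _
  have heq : ∫ t in (0:ℝ)..1, ⟪G (y + t • d), d⟫ = g (y + (1:ℝ) • d) - g (y + (0:ℝ) • d) := by
    exact intervalIntegral.integral_eq_sub_of_hasDerivAt
      (fun t _ => hφ t) hint
  have heq2 : ∫ t in (0:ℝ)..1, ⟪G (y + t • d), d⟫ = g x - g y := by
    rw [heq]; congr 1 <;> simp [hdd]
  have hmono : ∫ t in (0:ℝ)..1, (⟪G (y + t • d), d⟫ - ⟪G y, d⟫)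
      ≤ ∫ t in (0:ℝ)..1, (L * ‖d‖ ^ 2) * t := by
    apply intervalIntegral.integral_mono_on (by norm_num)
    · exact hint.sub (intervalIntegrable_const)
    · exact (Continuous.intervalIntegrable (by continuity) _ _)
    · intro t ht
      have ht0 : 0 ≤ t := ht.1
      have := hlip (y + t • d) y
      have h2 : ‖y + t • d - y‖ = t * ‖d‖ := by
        simp [norm_smul, abs_of_nonneg ht0]
      calc ⟪G (y + t • d), d⟫ - ⟪G y, d⟫ = ⟪G (y + t • d) - G y, d⟫ := by
            rw [inner_sub_left]
        _ ≤ ‖G (y + t • d) - G y‖ * ‖d‖ := real_inner_le_norm _ _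
        _ ≤ (L * (t * ‖d‖)) * ‖d‖ := by
            apply mul_le_mul_of_nonneg_right _ (norm_nonneg d)
            rw [← h2]; exact this
        _ = (L * ‖d‖ ^ 2) * t := by ring
  have hval : ∫ t in (0:ℝ)..1, (L * ‖d‖ ^ 2) * t = L * ‖d‖ ^ 2 / 2 := by
    rw [intervalIntegral.integral_const_mul, integral_id]
    ring
  have hsplit : ∫ t in (0:ℝ)..1, (⟪G (y + t • d), d⟫ - ⟪G y, d⟫)
      = (g x - g y) - ⟪G y, d⟫ := by
    rw [intervalIntegral.integral_sub hint intervalIntegrable_const, heq2]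
    simp
  rw [hsplit, hval] at hmono
  linarith
/-- gradient of a linear combination -/
lemma hasGradientAt_comb {ι : Type*} (s : Finset ι)
    (g : ι → EuclideanSpace ℝ (Fin p) → ℝ) (G : ι → EuclideanSpace ℝ (Fin p))
    (c : ι → ℝ) (x : EuclideanSpace ℝ (Fin p))
    (h : ∀ k ∈ s, HasGradientAt (g k) (G k) x) :
    HasGradientAt (fun z => ∑ k ∈ s, c k * g k z) (∑ k ∈ s, c k • G k) x := by
  rw [hasGradientAt_iff_hasFDerivAt, map_sum]
  have : ∀ k ∈ s, HasFDerivAt (fun z => c k * g k z)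
      ((InnerProductSpace.toDual ℝ _) (c k • G k)) x := by
    intro k hk
    have := ((h k hk).hasFDerivAt).const_mul (c k)
    simpa [map_smul] using this
  exact HasFDerivAt.fun_sum this

/-- a function constant in a direction has zero gradient component -/
lemma grad_coord_zero {g : EuclideanSpace ℝ (Fin p) → ℝ} {G : EuclideanSpace ℝ (Fin p)}
    {x : EuclideanSpace ℝ (Fin p)} (h : HasGradientAt g G x) (j : Fin p)
    (hconst : ∀ t : ℝ, g (x + t • EuclideanSpace.single j (1:ℝ)) = g x) :
    G j = 0 := by
  set e := EuclideanSpace.single j (1:ℝ) with he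
  have hd : HasDerivAt (fun t : ℝ => g (x + t • e)) ⟪G, e⟫ 0 := by
    apply dir_deriv; simpa using h
  have hconst' : (fun t : ℝ => g (x + t • e)) = fun _ => g x := funext hconst
  rw [hconst'] at hd
  have : ⟪G, e⟫ = 0 := by
    have := hd.unique (hasDerivAt_const 0 (g x))
    exact this
  rw [he] at this
  rw [real_inner_comm] at this
  simpa [EuclideanSpace.inner_single_left] using this
/-- key per-function inequality -/
lemma key_ineq (ξ : EuclideanSpace ℝ (Fin p) → ℝ)
    (g : EuclideanSpace ℝ (Fin p) → EuclideanSpace ℝ (Fin p))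
    (P : EuclideanSpace ℝ (Fin p) → EuclideanSpace ℝ (Fin p))
    (Lf μ L' : ℝ) (hL' : L' = Lf - μ) (hpos : 0 < L') (hμnn : 0 ≤ μ)
    (hPsub : ∀ u v, P (u - v) = P u - P v)
    (hPsmul : ∀ (c : ℝ) u, P (c • u) = c • P u)
    (hPP : ∀ u, P (P u) = P u)
    (hPsym : ∀ u v, ⟪P u, v⟫ = ⟪u, P v⟫)
    (hPg : ∀ a b, P (g a - g b) = g a - g b)
    (hsc : ∀ u v, ξ v + ⟪g v, u - v⟫ + μ / 2 * ‖P (u - v)‖ ^ 2 ≤ ξ u)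
    (hdesc : ∀ u v, ξ u ≤ ξ v + ⟪g v, u - v⟫ + Lf / 2 * ‖u - v‖ ^ 2)
    (x y : EuclideanSpace ℝ (Fin p)) :
    ξ y + ⟪g y, x - y⟫ + (μ * Lf / (2 * L')) * ‖P (x - y)‖ ^ 2
      + (1 / (2 * L')) * ‖g x - g y‖ ^ 2 + (μ / L') * ⟪g x - g y, y - x⟫ ≤ ξ x := by
  set d := x - y with hd
  set Δ := g x - g y with hΔ
  set Pd := P d with hPd
  set Δh := Δ - μ • Pd with hΔh
  set w := x - L'⁻¹ • Δh with hw
  have hwy : w - y = d - L'⁻¹ • Δh := by rw [hw, hd]; abel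
  have hwx : w - x = -(L'⁻¹ • Δh) := by rw [hw]; abel
  have hPΔh : P Δh = Δh := by
    rw [hΔh, hPsub, hPsmul, hPP, hPg]
  have h1 := hsc w y
  have h2 := hdesc w x
  -- scalar abbreviations
  have e1 : ‖P (w - y)‖ ^ 2
      = ‖Pd‖ ^ 2 - 2 * L'⁻¹ * ⟪Pd, Δh⟫ + L'⁻¹ ^ 2 * ‖Δh‖ ^ 2 := by
    rw [hwy, hPsub, hPsmul, hPΔh, norm_sub_sq_real, real_inner_smul_right, norm_smul]
    simp [abs_inv, abs_of_pos hpos]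
    ring
  have e2 : ⟪g y, w - y⟫ = ⟪g y, d⟫ - L'⁻¹ * ⟪g y, Δh⟫ := by
    rw [hwy, inner_sub_right, real_inner_smul_right]
  have e3 : ⟪g x, w - x⟫ = -(L'⁻¹ * ⟪g x, Δh⟫) := by
    rw [hwx, inner_neg_right, real_inner_smul_right]
  have e4 : ‖w - x‖ ^ 2 = L'⁻¹ ^ 2 * ‖Δh‖ ^ 2 := by
    rw [hwx, norm_neg, norm_smul]
    simp [abs_inv, abs_of_pos hpos]
    ring
  have e5 : ⟪g x, Δh⟫ - ⟪g y, Δh⟫ = ‖Δh‖ ^ 2 + μ * ⟪Pd, Δh⟫ := by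
    have : ⟪g x, Δh⟫ - ⟪g y, Δh⟫ = ⟪Δ, Δh⟫ := by rw [hΔ, inner_sub_left]
    rw [this]
    have : (Δ : EuclideanSpace ℝ (Fin p)) = Δh + μ • Pd := by rw [hΔh]; abel
    rw [this, inner_add_left, real_inner_smul_left, real_inner_self_eq_norm_sq]
  have e6 : ⟪Δ, Pd⟫ = ⟪Δ, d⟫ := by
    rw [hPd, ← hPsym, hPg]
  have e7 : ‖Δh‖ ^ 2 = ‖Δ‖ ^ 2 - 2 * μ * ⟪Δ, d⟫ + μ ^ 2 * ‖Pd‖ ^ 2 := by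
    rw [hΔh, norm_sub_sq_real, real_inner_smul_right, e6, norm_smul]
    simp [abs_of_nonneg hμnn]
    ring
  have e8 : ⟪Δ, y - x⟫ = -⟪Δ, d⟫ := by
    rw [hd, ← inner_neg_right]; congr 1; abel
  rw [e1, e2] at h1
  rw [e3, e4] at h2
  rw [e8]
  have h5 : ⟪g x, Δh⟫ = ⟪g y, Δh⟫ + ‖Δh‖ ^ 2 + μ * ⟪Pd, Δh⟫ := by linarith [e5]
  rw [h5] at h2
  have hL'ne : L' ≠ 0 := ne_of_gt hpos
  have hLfeq : Lf = L' + μ := by rw [hL']; ring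
  rw [hLfeq] at h2 ⊢
  set t := L'⁻¹ with ht
  set A := (⟪g y, d⟫ : ℝ) with hA
  set B := (⟪g y, Δh⟫ : ℝ) with hB
  set ip := (⟪Pd, Δh⟫ : ℝ) with hip
  set s := ‖Δh‖ ^ 2 with hs
  set pq := ‖Pd‖ ^ 2 with hpq
  set nΔ := ‖Δ‖ ^ 2 with hnΔ
  set iΔd := (⟪Δ, d⟫ : ℝ) with hiΔd
  have htL : L' * t = 1 := mul_inv_cancel₀ hL'ne
  have comb := h1.trans h2
  clear_value t A B ip s pq nΔ iΔd
  clear h1 h2 h5 e1 e2 e3 e4 e5 e6 e8 hsc hdesc hPsub hPsmul hPP hPsym hPg hPΔh hwy hwx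
  have haux : L' * (t * (t * s)) = t * s := by rw [← mul_assoc, htL, one_mul]
  have goal2 : ξ y + A + μ / 2 * pq + t / 2 * s ≤ ξ x := by nlinarith [comb, haux]
  have c1 : (1:ℝ) / (2 * L') = t / 2 := by rw [ht]; field_simp
  have c2 : μ / L' = μ * t := by rw [ht]; field_simp
  have c3 : μ * (L' + μ) / (2 * L') = μ / 2 + μ ^ 2 * t / 2 := by
    rw [ht]; field_simp
  rw [c1, c2, c3]
  have e7t : t * s = t * nΔ - 2 * μ * (t * iΔd) + μ ^ 2 * (t * pq) := by
    linear_combination t * e7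
  linarith [goal2, e7t]

set_option maxHeartbeats 2000000 in
/-- strong convexity inequality.  With `f = (1/n)∑ᵢ ψᵢ + ω`, each `ψᵢ`
`μ_ψ`-strongly convex and `L_ψ`-smooth, `ω` `μ_ω`-strongly convex, `L_ω`-smooth and block
separable, `ξᵢ(x) = ψᵢ(x) + ∑_{B∈Tᵢ} d_B ω_B([x]_B)`, `μ = μ_ψ + μ_ω`, and
`L_f = L_ψ + d_max L_ω`, for all `x, y`:
`f(x) ≥ f(y) + ⟨∇f(y), x−y⟩ + (1/(2n(L_f−μ))) ∑ᵢ ‖∇ξᵢ(x) − ∇ξᵢ(y)‖²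
  + (μ L_f/(2 d_max (L_f−μ))) ‖x−y‖² + (μ/(L_f−μ)) ⟨∇f(x) − ∇f(y), y−x⟩`. -/
theorem strong_convexity_inequality
    {n : ℕ} (hn : 0 < n)
    {Bk : Type} [Fintype Bk] [DecidableEq Bk] (blk : Fin p → Bk)
    (ψ : Fin n → EuclideanSpace ℝ (Fin p) → ℝ)
    (gradψ : Fin n → EuclideanSpace ℝ (Fin p) → EuclideanSpace ℝ (Fin p))
    (Lψ μψ : ℝ)
    (hψdiff : ∀ i x, HasGradientAt (ψ i) (gradψ i x) x)
    (hψlip : ∀ i x y, ‖gradψ i x - gradψ i y‖ ≤ Lψ * ‖x - y‖)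
    (hψsc : ∀ i, StrongConvexOnR μψ (ψ i))
    (hμψ : 0 ≤ μψ)
    (ωB : Bk → EuclideanSpace ℝ (Fin p) → ℝ)
    (hωB_block : ∀ b x y, (∀ j, blk j = b → x j = y j) → ωB b x = ωB b y)
    (gradωB : Bk → EuclideanSpace ℝ (Fin p) → EuclideanSpace ℝ (Fin p))
    (hωBdiff : ∀ b x, HasGradientAt (ωB b) (gradωB b x) x)
    (ω : EuclideanSpace ℝ (Fin p) → ℝ)
    (hω : ∀ x, ω x = ∑ b, ωB b x)
    (gradω : EuclideanSpace ℝ (Fin p) → EuclideanSpace ℝ (Fin p))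
    (hωdiff : ∀ x, HasGradientAt ω (gradω x) x)
    (Lω μω : ℝ)
    (hωlip : ∀ x y, ‖gradω x - gradω y‖ ≤ Lω * ‖x - y‖)
    (hωsc : StrongConvexOnR μω ω)
    (hμω : 0 ≤ μω)
    -- extended supports and reweighting constants
    (T : Fin n → Finset Bk)
    (hTsupp : ∀ i x j, blk j ∉ T i → gradψ i x j = 0)
    (hTcover : ∀ b, ∃ i, b ∈ T i)
    (dB : Bk → ℝ)
    (hdB : ∀ b, dB b = (n : ℝ) / ((univ.filter (fun i : Fin n => b ∈ T i)).card : ℝ))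
    (dmax : ℝ) (hdmax : IsGreatest (Set.range dB) dmax)
    (Lf μ : ℝ) (hLf : Lf = Lψ + dmax * Lω) (hμ : μ = μψ + μω) (hμlt : μ < Lf)
    (f : EuclideanSpace ℝ (Fin p) → ℝ)
    (hf : ∀ x, f x = (n : ℝ)⁻¹ * ∑ i, ψ i x + ω x)
    (gradf : EuclideanSpace ℝ (Fin p) → EuclideanSpace ℝ (Fin p))
    (hfdiff : ∀ x, HasGradientAt f (gradf x) x)
    (gradξ : Fin n → EuclideanSpace ℝ (Fin p) → EuclideanSpace ℝ (Fin p))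
    (hgradξ : ∀ i x, gradξ i x = gradψ i x + ∑ b ∈ T i, dB b • gradωB b x) :
    ∀ x y : EuclideanSpace ℝ (Fin p),
      f y + ⟪gradf y, x - y⟫
        + (1 / (2 * n * (Lf - μ))) * ∑ i, ‖gradξ i x - gradξ i y‖ ^ 2
        + (μ * Lf / (2 * dmax * (Lf - μ))) * ‖x - y‖ ^ 2
        + (μ / (Lf - μ)) * ⟪gradf x - gradf y, y - x⟫
      ≤ f x := by
  intro x y
  -- ## basic positivity facts
  have hnR : (0:ℝ) < n := Nat.cast_pos.mpr hn
  have hcard_pos : ∀ b : Bk, 0 < ((univ.filter (fun i : Fin n => b ∈ T i)).card : ℝ) := by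
    intro b
    obtain ⟨i, hi⟩ := hTcover b
    have : 0 < (univ.filter (fun i : Fin n => b ∈ T i)).card :=
      card_pos.mpr ⟨i, mem_filter.mpr ⟨mem_univ i, hi⟩⟩
    exact_mod_cast this
  have hdB1 : ∀ b, 1 ≤ dB b := by
    intro b
    rw [hdB]
    rw [le_div_iff₀ (hcard_pos b), one_mul]
    have : (univ.filter (fun i : Fin n => b ∈ T i)).card ≤ n := by
      simpa using card_filter_le univ (fun i : Fin n => b ∈ T i)
    exact_mod_cast this
  have hdBpos : ∀ b, 0 < dB b := fun b => lt_of_lt_of_le one_pos (hdB1 b)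
  have hdmax_ge : ∀ b, dB b ≤ dmax := fun b => hdmax.2 ⟨b, rfl⟩
  have hdmax_pos : 0 < dmax := by
    obtain ⟨b0, hb0⟩ := hdmax.1
    exact hb0 ▸ hdBpos b0
  have hμnn : 0 ≤ μ := by rw [hμ]; positivity
  have hL'pos : 0 < Lf - μ := sub_pos.mpr hμlt
  have hLfpos : 0 < Lf := lt_of_le_of_lt hμnn hμlt
  have hnb : ∀ b, ((univ.filter (fun i : Fin n => b ∈ T i)).card : ℝ) * dB b = n := by
    intro b
    rw [hdB, mul_div_cancel₀ _ (ne_of_gt (hcard_pos b))]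
  -- ## support of gradωB
  have hωBsupp : ∀ b z j, blk j ≠ b → gradωB b z j = 0 := by
    intro b z j hbj
    apply grad_coord_zero (hωBdiff b z) j
    intro t
    apply hωB_block
    intro j' hj'
    have hne : j' ≠ j := by rintro rfl; exact hbj hj'
    simp [EuclideanSpace.single_apply, hne]
  -- ## ξ functions
  set ξ : Fin n → EuclideanSpace ℝ (Fin p) → ℝ :=
    fun i z => ψ i z + ∑ b ∈ T i, dB b * ωB b z with hξ
  have hξdiff : ∀ i z, HasGradientAt (ξ i) (gradξ i z) z := by
    intro i z
    rw [hgradξ, hasGradientAt_iff_hasFDerivAt, map_add]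
    exact ((hψdiff i z).hasFDerivAt).add
      ((hasGradientAt_comb (T i) ωB (fun b => gradωB b z) dB z
        (fun b _ => hωBdiff b z)).hasFDerivAt)
  -- ## gradient of ω decomposes
  have gradω_eq : ∀ z, gradω z = ∑ b, gradωB b z := by
    intro z
    have h := hasGradientAt_comb univ ωB (fun b => gradωB b z) (fun _ => (1:ℝ)) z
      (fun b _ => hωBdiff b z)
    have heq : (fun z => ∑ b, (1:ℝ) * ωB b z) = ω := by
      funext z; rw [hω z]; simp
    rw [heq] at h
    have := (hωdiff z).unique h
    simpa using this
  -- ## value identity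
  have hfξ : ∀ z, f z = (n:ℝ)⁻¹ * ∑ i, ξ i z := by
    intro z
    have hswap : ∑ i, ∑ b ∈ T i, dB b * ωB b z
        = ∑ b, ∑ i ∈ univ.filter (fun i : Fin n => b ∈ T i), dB b * ωB b z := by
      rw [Finset.sum_comm' (t' := univ)
        (s' := fun b => univ.filter (fun i : Fin n => b ∈ T i))
        (h := by intro i b; simp)]
    have hswap2 : ∑ i, ∑ b ∈ T i, dB b * ωB b z = (n : ℝ) * ω z := by
      rw [hswap, hω, Finset.mul_sum]
      apply Finset.sum_congr rfl
      intro b _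
      rw [Finset.sum_const, nsmul_eq_mul, ← mul_assoc, hnb b]
    rw [hf, hξ]
    simp only
    rw [Finset.sum_add_distrib, hswap2, mul_add,
      inv_mul_cancel_left₀ (ne_of_gt hnR)]
  -- ## gradient identity
  have hgradf : ∀ z, gradf z = (n:ℝ)⁻¹ • ∑ i, gradξ i z := by
    intro z
    have h := hasGradientAt_comb univ ξ (fun i => gradξ i z) (fun _ => (n:ℝ)⁻¹) z
      (fun i _ => hξdiff i z)
    have heq : (fun z => ∑ i, (n:ℝ)⁻¹ * ξ i z) = f := by
      funext z; rw [hfξ z, Finset.mul_sum]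
    rw [heq] at h
    have := (hfdiff z).unique h
    rw [this, Finset.smul_sum]
  -- ## Lipschitz bound for gradξ
  have hξlip : ∀ i a c, ‖gradξ i a - gradξ i c‖ ≤ Lf * ‖a - c‖ := by
    intro i a c
    have hrw : gradξ i a - gradξ i c
        = (gradψ i a - gradψ i c) + ∑ b ∈ T i, dB b • (gradωB b a - gradωB b c) := by
      rw [hgradξ, hgradξ]
      simp only [smul_sub]
      rw [Finset.sum_sub_distrib]
      abel
    set u := ∑ b ∈ T i, dB b • (gradωB b a - gradωB b c) with hu
    set w := gradω a - gradω c with hwdef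
    have hwsum : w = ∑ b, (gradωB b a - gradωB b c) := by
      rw [hwdef, gradω_eq, gradω_eq, ← Finset.sum_sub_distrib]
    have hcoord : ∀ j, w j = gradωB (blk j) a j - gradωB (blk j) c j := by
      intro j
      rw [hwsum]
      rw [WithLp.ofLp_sum, Finset.sum_apply]
      rw [Finset.sum_eq_single (blk j)]
      · simp
      · intro b' _ hb'
        simp [hωBsupp b' a j (fun h => hb' h.symm), hωBsupp b' c j (fun h => hb' h.symm)]
      · intro h; exact absurd (mem_univ _) h
    have hucoord : ∀ j, u j = if blk j ∈ T i then dB (blk j) * w j else 0 := by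
      intro j
      rw [hu, WithLp.ofLp_sum, Finset.sum_apply]
      have hterm : ∀ b ∈ T i, (dB b • (gradωB b a - gradωB b c)) j
          = if blk j = b then dB b * (gradωB b a j - gradωB b c j) else 0 := by
        intro b _
        by_cases hbj : blk j = b
        · simp [hbj]
        · simp [hbj, hωBsupp b a j (fun h => hbj h), hωBsupp b c j (fun h => hbj h)]
      rw [Finset.sum_congr rfl hterm, Finset.sum_ite_eq (T i) (blk j)]
      rw [hcoord j]
    have hnorm_u : ‖u‖ ^ 2 ≤ dmax ^ 2 * ‖w‖ ^ 2 := by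
      rw [norm_sq_eq, norm_sq_eq, Finset.mul_sum]
      apply Finset.sum_le_sum
      intro j _
      rw [hucoord j]
      split
      · have h1 : 0 ≤ dB (blk j) := le_of_lt (hdBpos _)
        have h2 := hdmax_ge (blk j)
        have h3 : dB (blk j) ^ 2 ≤ dmax ^ 2 := by nlinarith
        nlinarith [sq_nonneg (w j), mul_le_mul_of_nonneg_right h3 (sq_nonneg (w j))]
      · norm_num
        positivity
    have hnu : ‖u‖ ≤ dmax * ‖w‖ := by
      have h2 : ‖u‖ ^ 2 ≤ (dmax * ‖w‖) ^ 2 := by rw [mul_pow]; exact hnorm_u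
      have h3 := Real.sqrt_le_sqrt h2
      rwa [Real.sqrt_sq (norm_nonneg u), Real.sqrt_sq (by positivity)] at h3
    calc ‖gradξ i a - gradξ i c‖ = ‖(gradψ i a - gradψ i c) + u‖ := by rw [hrw]
      _ ≤ ‖gradψ i a - gradψ i c‖ + ‖u‖ := norm_add_le _ _
      _ ≤ Lψ * ‖a - c‖ + dmax * ‖w‖ := add_le_add (hψlip i a c) hnu
      _ ≤ Lψ * ‖a - c‖ + dmax * (Lω * ‖a - c‖) :=
          add_le_add_right (mul_le_mul_of_nonneg_left (hωlip a c) (le_of_lt hdmax_pos)) _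
      _ = Lf * ‖a - c‖ := by rw [hLf]; ring
  -- ## the per-i key inequality
  have KEY : ∀ i, ξ i y + ⟪gradξ i y, x - y⟫
      + (μ * Lf / (2 * (Lf - μ))) * (∑ j, if blk j ∈ T i then ((x - y) j) ^ 2 else 0)
      + (1 / (2 * (Lf - μ))) * ‖gradξ i x - gradξ i y‖ ^ 2
      + (μ / (Lf - μ)) * ⟪gradξ i x - gradξ i y, y - x⟫ ≤ ξ i x := by
    -- per-block strong convexity of ωB
    have hblock : ∀ (b : Bk) (u v : EuclideanSpace ℝ (Fin p)),
        ⟪gradωB b v, u - v⟫ + μω / 2 * (∑ j, if blk j = b then ((u - v) j) ^ 2 else 0)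
          ≤ ωB b u - ωB b v := by
      intro b u v
      set z : EuclideanSpace ℝ (Fin p) := projP blk {b} (u - v) with hz
      have hzap : ∀ j, z j = if blk j = b then (u - v) j else 0 :=
        projP_single_apply blk b (u - v)
      set u' := v + z with hu'
      have h1 := sc_lower hωsc u' v (hωdiff v)
      have hu'v : u' - v = z := by rw [hu']; abel
      rw [hu'v] at h1
      have hu'ap : ∀ j, u' j = v j + z j := fun j => rfl
      have hval : ω u' - ω v = ωB b u - ωB b v := by
        rw [hω, hω, ← Finset.sum_sub_distrib]
        rw [Finset.sum_eq_single b]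
        · have : ωB b u' = ωB b u := by
            apply hωB_block
            intro j hj
            rw [hu'ap, hzap]
            simp [hj, PiLp.sub_apply]
          rw [this]
        · intro b' _ hb'
          have : ωB b' u' = ωB b' v := by
            apply hωB_block
            intro j hj
            rw [hu'ap, hzap]
            have : blk j ≠ b := by rw [hj]; exact hb'
            simp [this]
          rw [this, sub_self]
        · intro h; exact absurd (mem_univ _) h
      have hinner : ⟪gradω v, z⟫ = ⟪gradωB b v, u - v⟫ := by
        rw [gradω_eq, sum_inner]
        rw [Finset.sum_eq_single b]
        · simp only [PiLp.inner_apply, RCLike.inner_apply, conj_trivial]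
          apply Finset.sum_congr rfl
          intro j _
          rw [hzap]
          split
          · rfl
          · rename_i hbj
            rw [hωBsupp b v j hbj]
            simp
        · intro b' _ hb'
          simp only [PiLp.inner_apply, RCLike.inner_apply, conj_trivial]
          apply Finset.sum_eq_zero
          intro j _
          rw [hzap]
          by_cases hbj : blk j = b
          · rw [hωBsupp b' v j (by rw [hbj]; exact hb'.symm)]
            simp
          · simp [hbj]
        · intro h; exact absurd (mem_univ _) h
      have hnz : ‖z‖ ^ 2 = ∑ j, if blk j = b then ((u - v) j) ^ 2 else 0 :=
        projP_single_normsq blk b (u - v)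
      rw [hinner, hnz] at h1
      linarith [h1, hval.ge, hval.le]
    intro i
    set P : EuclideanSpace ℝ (Fin p) → EuclideanSpace ℝ (Fin p) := projP blk (T i) with hP
    have hap : ∀ z j, P z j = if blk j ∈ T i then z j else 0 :=
      fun z j => projP_apply blk (T i) z j
    have hPsub : ∀ u v, P (u - v) = P u - P v := projP_sub blk (T i)
    have hPsmul : ∀ (c : ℝ) u, P (c • u) = c • P u := projP_smul blk (T i)
    have hPP : ∀ u, P (P u) = P u := projP_idem blk (T i)
    have hPsym : ∀ u v, ⟪P u, v⟫ = ⟪u, P v⟫ := projP_sym blk (T i)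
    have hPnormsq : ∀ z, ‖P z‖ ^ 2 = ∑ j, if blk j ∈ T i then (z j) ^ 2 else 0 :=
      projP_normsq blk (T i)
    have hPg : ∀ a c, P (gradξ i a - gradξ i c) = gradξ i a - gradξ i c := by
      intro a c
      have hz : ∀ (z : EuclideanSpace ℝ (Fin p)) j, blk j ∉ T i → gradξ i z j = 0 := by
        intro z j hj
        rw [hgradξ]
        have h1 : (gradψ i z + ∑ b ∈ T i, dB b • gradωB b z) j
            = gradψ i z j + (∑ b ∈ T i, dB b • gradωB b z) j := rfl
        rw [h1, WithLp.ofLp_sum, Finset.sum_apply, hTsupp i z j hj]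
        rw [Finset.sum_eq_zero, add_zero]
        intro b hb
        have : blk j ≠ b := fun h => hj (h ▸ hb)
        simp [hωBsupp b z j this]
      ext j
      rw [hap]
      split
      · rfl
      · rename_i hj
        show (0:ℝ) = gradξ i a j - gradξ i c j
        rw [hz a j hj, hz c j hj, sub_zero]
    have hsc : ∀ u v, ξ i v + ⟪gradξ i v, u - v⟫ + μ / 2 * ‖P (u - v)‖ ^ 2 ≤ ξ i u := by
      intro u v
      have hψpart := sc_lower (hψsc i) u v (hψdiff i v)
      have hPle : ‖P (u - v)‖ ^ 2 ≤ ‖u - v‖ ^ 2 := by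
        rw [hPnormsq, norm_sq_eq]
        apply Finset.sum_le_sum
        intro j _
        split
        · exact le_refl _
        · positivity
      have hblocks : ∀ b ∈ T i,
          dB b * ωB b v + dB b * ⟪gradωB b v, u - v⟫
            + μω / 2 * (∑ j, if blk j = b then ((u - v) j) ^ 2 else 0) ≤ dB b * ωB b u := by
        intro b _
        have h := hblock b u v
        have hSnn : (0:ℝ) ≤ ∑ j, if blk j = b then ((u - v) j) ^ 2 else 0 := by
          apply Finset.sum_nonneg
          intro j _
          split <;> positivity
        have h2 : dB b * (⟪gradωB b v, u - v⟫
            + μω / 2 * (∑ j, if blk j = b then ((u - v) j) ^ 2 else 0))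
            ≤ dB b * (ωB b u - ωB b v) := mul_le_mul_of_nonneg_left h (le_of_lt (hdBpos b))
        have h3 : μω / 2 * (∑ j, if blk j = b then ((u - v) j) ^ 2 else 0)
            ≤ dB b * (μω / 2 * (∑ j, if blk j = b then ((u - v) j) ^ 2 else 0)) :=
          le_mul_of_one_le_left (by positivity) (hdB1 b)
        nlinarith [h2, h3]
      have hsum := Finset.sum_le_sum hblocks
      have hinner : ⟪gradξ i v, u - v⟫
          = ⟪gradψ i v, u - v⟫ + ∑ b ∈ T i, dB b * ⟪gradωB b v, u - v⟫ := by
        rw [hgradξ, inner_add_left, sum_inner]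
        congr 1
        apply Finset.sum_congr rfl
        intro b _
        rw [real_inner_smul_left]
      have hSsum : ∑ b ∈ T i, (∑ j, if blk j = b then ((u - v) j) ^ 2 else 0)
          = ‖P (u - v)‖ ^ 2 := by
        rw [hPnormsq, Finset.sum_comm]
        apply Finset.sum_congr rfl
        intro j _
        rw [Finset.sum_ite_eq (T i) (blk j)]
      rw [Finset.sum_add_distrib, Finset.sum_add_distrib, ← Finset.mul_sum, hSsum] at hsum
      show ψ i v + (∑ b ∈ T i, dB b * ωB b v) + ⟪gradξ i v, u - v⟫ + μ / 2 * ‖P (u - v)‖ ^ 2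
          ≤ ψ i u + (∑ b ∈ T i, dB b * ωB b u)
      rw [hinner, hμ]
      have hμψP : μψ / 2 * ‖P (u - v)‖ ^ 2 ≤ μψ / 2 * ‖u - v‖ ^ 2 := by
        apply mul_le_mul_of_nonneg_left hPle
        positivity
      linarith [hψpart, hsum, hμψP]
    have hdesc : ∀ u v, ξ i u ≤ ξ i v + ⟪gradξ i v, u - v⟫ + Lf / 2 * ‖u - v‖ ^ 2 :=
      fun u v => descent_lemma (hξdiff i) (hξlip i) u v
    have hKi := key_ineq (ξ i) (gradξ i) P Lf μ (Lf - μ) rfl hL'pos hμnn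
      hPsub hPsmul hPP hPsym hPg hsc hdesc x y
    rw [hPnormsq] at hKi
    exact hKi
  -- ## summation and conclusion
  have SKEY := Finset.sum_le_sum (fun i (_ : i ∈ univ) => KEY i)
  set A := ∑ i, ξ i y with hA
  set C := ∑ i, ξ i x with hC
  set B := ∑ i, ⟪gradξ i y, x - y⟫ with hB
  set SN := ∑ i, ‖gradξ i x - gradξ i y‖ ^ 2 with hSN
  set SJ := ∑ i, ⟪gradξ i x - gradξ i y, y - x⟫ with hSJ
  set SP := ∑ i, (∑ j, if blk j ∈ T i then ((x - y) j) ^ 2 else 0) with hSP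
  have SKEY' : A + B + (μ * Lf / (2 * (Lf - μ))) * SP + (1 / (2 * (Lf - μ))) * SN
      + (μ / (Lf - μ)) * SJ ≤ C := by
    rw [hA, hB, hSP, hSN, hSJ, Finset.mul_sum, Finset.mul_sum, Finset.mul_sum,
      ← Finset.sum_add_distrib, ← Finset.sum_add_distrib, ← Finset.sum_add_distrib,
      ← Finset.sum_add_distrib]
    exact SKEY
  have hSPb : (n:ℝ) / dmax * ‖x - y‖ ^ 2 ≤ SP := by
    rw [hSP, Finset.sum_comm, norm_sq_eq, Finset.mul_sum]
    apply Finset.sum_le_sum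
    intro j _
    rw [← Finset.sum_filter, Finset.sum_const, nsmul_eq_mul]
    have hcb : (n:ℝ) / dmax ≤ ((univ.filter (fun i : Fin n => blk j ∈ T i)).card : ℝ) := by
      rw [div_le_iff₀ hdmax_pos]
      have h1 := hdmax_ge (blk j)
      rw [hdB, div_le_iff₀ (hcard_pos (blk j))] at h1
      linarith [h1]
    exact mul_le_mul_of_nonneg_right hcb (sq_nonneg _)
  have hfx : f x = (n:ℝ)⁻¹ * C := hfξ x
  have hfy : f y = (n:ℝ)⁻¹ * A := hfξ y
  have hJ1 : ⟪gradf y, x - y⟫ = (n:ℝ)⁻¹ * B := by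
    rw [hgradf y, real_inner_smul_left, hB, sum_inner]
  have hJ2 : ⟪gradf x - gradf y, y - x⟫ = (n:ℝ)⁻¹ * SJ := by
    rw [hgradf x, hgradf y, ← smul_sub, real_inner_smul_left, ← Finset.sum_sub_distrib,
      sum_inner, hSJ]
  have hnul := mul_le_mul_of_nonneg_left SKEY' (le_of_lt (inv_pos.mpr hnR))
  have hcP : (0:ℝ) ≤ μ * Lf / (2 * (Lf - μ)) := by positivity
  have hSP2 : μ * Lf / (2 * dmax * (Lf - μ)) * ‖x - y‖ ^ 2
      ≤ (n:ℝ)⁻¹ * ((μ * Lf / (2 * (Lf - μ))) * SP) := by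
    have h1 : (n:ℝ)⁻¹ * ((μ * Lf / (2 * (Lf - μ))) * ((n:ℝ) / dmax * ‖x - y‖ ^ 2))
        = μ * Lf / (2 * dmax * (Lf - μ)) * ‖x - y‖ ^ 2 := by
      field_simp
    rw [← h1]
    apply mul_le_mul_of_nonneg_left _ (by positivity)
    exact mul_le_mul_of_nonneg_left hSPb hcP
  have hcN : (n:ℝ)⁻¹ * ((1 / (2 * (Lf - μ))) * SN) = (1 / (2 * (n:ℝ) * (Lf - μ))) * SN := by
    field_simp
  have hcJ : (n:ℝ)⁻¹ * ((μ / (Lf - μ)) * SJ) = (μ / (Lf - μ)) * ((n:ℝ)⁻¹ * SJ) := by ring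
  rw [hfx, hfy, hJ1, hJ2]
  have hdist : (n:ℝ)⁻¹ * (A + B + (μ * Lf / (2 * (Lf - μ))) * SP
        + (1 / (2 * (Lf - μ))) * SN + (μ / (Lf - μ)) * SJ)
      = (n:ℝ)⁻¹ * A + (n:ℝ)⁻¹ * B + (n:ℝ)⁻¹ * ((μ * Lf / (2 * (Lf - μ))) * SP)
        + (n:ℝ)⁻¹ * ((1 / (2 * (Lf - μ))) * SN) + (n:ℝ)⁻¹ * ((μ / (Lf - μ)) * SJ) := by
    ring
  rw [hdist] at hnul
  linarith [hnul, hSP2, hcN.ge, hcN.le, hcJ.ge, hcJ.le]
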